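/- Let K/F be a field extension and let x, y ∈ K have degrees a = md and b = nd over F, where d = gcd(a, b). Assume that F[x]/F and F[y]/F are finite Galois extensions and that K = F[x, y] has degree mnd = lcm(a, b) over F. Let E = F[x] ∩ F[y]. Then for all nonzero α, β ∈ F the element z = αx + βy satisfies K = E[z]; that is, z has degree mn over E. -/

import Mathlib

open IntermediateField Module Pointwise

theorem stmt4 (F K : Type*) [Field F] [Field K] [Algebra F K]
    (x y : K) (a b d m n : ℕ)
    (hd : d = Nat.gcd a b) (ha : a = m * d) (hb : b = n * d)
    (hdegx : Module.finrank F (IntermediateField.adjoin F {x}) = a)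
    (hdegy : Module.finrank F (IntermediateField.adjoin F {y}) = b)
    (hfinx : FiniteDimensional F (IntermediateField.adjoin F {x}))
    (hfiny : FiniteDimensional F (IntermediateField.adjoin F {y}))
    (hGx : IsGalois F (IntermediateField.adjoin F {x}))
    (hGy : IsGalois F (IntermediateField.adjoin F {y}))
    (hK : IntermediateField.adjoin F {x, y} = ⊤)
    (hdegK : Module.finrank F K = m * n * d)
    (E : IntermediateField F K)
    (hE : E = IntermediateField.adjoin F {x} ⊓ IntermediateField.adjoin F {y}) :
    ∀ α β : F, α ≠ 0 → β ≠ 0 →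
      IntermediateField.adjoin E {α • x + β • y} = (⊤ : IntermediateField E K) ∧
      Module.finrank E (IntermediateField.adjoin E {α • x + β • y}) = m * n := by
  classical
  intro α β hα hβ
  set Fx := IntermediateField.adjoin F {x} with hFx
  set Fy := IntermediateField.adjoin F {y} with hFy
  have hsup : Fx ⊔ Fy = ⊤ := by
    rw [hFx, hFy, ← IntermediateField.adjoin_union, Set.singleton_union]
    exact hK
  haveI : FiniteDimensional F ↥(Fx ⊔ Fy) := IntermediateField.finiteDimensional_sup Fx Fy
  haveI : IsGalois F ↥(Fx ⊔ Fy) := { }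
  haveI hGK : IsGalois F K :=
    IsGalois.of_algEquiv ((IntermediateField.equivOfEq hsup).trans IntermediateField.topEquiv)
  haveI : FiniteDimensional F K :=
    LinearEquiv.finiteDimensional ((IntermediateField.equivOfEq hsup).trans
      IntermediateField.topEquiv).toLinearEquiv
  -- numerics
  have ha0 : 0 < a := hdegx ▸ Module.finrank_pos
  have hb0 : 0 < b := hdegy ▸ Module.finrank_pos
  have hd0 : 0 < d := hd ▸ Nat.gcd_pos_of_pos_left _ ha0
  have hm0 : 0 < m := by
    rcases Nat.eq_zero_or_pos m with h | h
    · subst h; simp at ha; omega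
    · exact h
  have hn0 : 0 < n := by
    rcases Nat.eq_zero_or_pos n with h | h
    · subst h; simp at hb; omega
    · exact h
  have hmn : Nat.Coprime m n := by
    have h1 : Nat.gcd m n * d = 1 * d := by
      rw [one_mul, ← Nat.gcd_mul_right, ← ha, ← hb, ← hd]
    exact Nat.eq_of_mul_eq_mul_right hd0 h1
  -- tower degrees
  have hKFx : Module.finrank ↥Fx K = n := by
    have h := Module.finrank_mul_finrank F ↥Fx K
    rw [hdegx, hdegK, ha] at h
    have h2 : m * d * Module.finrank ↥Fx K = m * d * n := by rw [h]; ring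
    exact Nat.eq_of_mul_eq_mul_left (by positivity) h2
  have hKFy : Module.finrank ↥Fy K = m := by
    have h := Module.finrank_mul_finrank F ↥Fy K
    rw [hdegy, hdegK, hb] at h
    have h2 : n * d * Module.finrank ↥Fy K = n * d * m := by rw [h]; ring
    exact Nat.eq_of_mul_eq_mul_left (by positivity) h2
  -- the Galois group picture
  set H1 := Fx.fixingSubgroup with hH1
  set H2 := Fy.fixingSubgroup with hH2
  have hH1card : Nat.card ↥H1 = n := by
    rw [hH1, IsGalois.card_fixingSubgroup_eq_finrank, hKFx]
  have hH2card : Nat.card ↥H2 = m := by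
    rw [hH2, IsGalois.card_fixingSubgroup_eq_finrank, hKFy]
  have ffH1 : IntermediateField.fixedField H1 = Fx := IsGalois.fixedField_fixingSubgroup Fx
  have ffH2 : IntermediateField.fixedField H2 = Fy := IsGalois.fixedField_fixingSubgroup Fy
  have anti : ∀ {H H' : Subgroup (K ≃ₐ[F] K)}, H ≤ H' →
      IntermediateField.fixedField H' ≤ IntermediateField.fixedField H := by
    intro H H' hle k hk
    exact fun g => hk ⟨g.1, hle g.2⟩
  haveI hN1 : H1.Normal := by rw [hH1]; infer_instance
  haveI hN2 : H2.Normal := by rw [hH2]; infer_instance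
  have hinf : H1 ⊓ H2 = ⊥ := by
    have h1 : IntermediateField.fixedField (H1 ⊓ H2) = ⊤ := by
      rw [eq_top_iff, ← hsup]
      exact sup_le (ffH1 ▸ anti inf_le_left) (ffH2 ▸ anti inf_le_right)
    have h2 := IntermediateField.fixingSubgroup_fixedField (H1 ⊓ H2)
    rw [h1] at h2
    rw [← h2]
    refine (Subgroup.eq_bot_iff_forall _).mpr fun σ hσ => ?_
    apply AlgEquiv.ext; intro k
    exact (IntermediateField.mem_fixingSubgroup_iff _ _).mp hσ k trivial
  have hfF : IntermediateField.fixedField (H1 ⊔ H2) = E := by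
    apply le_antisymm
    · rw [hE]
      exact le_inf (ffH1 ▸ anti le_sup_left) (ffH2 ▸ anti le_sup_right)
    · intro k hk
      rw [hE] at hk
      intro g
      have hg : (g : K ≃ₐ[F] K) ∈ ((H1 : Set (K ≃ₐ[F] K)) * (H2 : Set (K ≃ₐ[F] K))) := by
        rw [← Subgroup.normal_mul]; exact g.2
      obtain ⟨g1, hg1, g2, hg2, hgeq⟩ := hg
      show (g : K ≃ₐ[F] K) k = k
      rw [← hgeq, AlgEquiv.mul_apply,
        (IntermediateField.mem_fixingSubgroup_iff _ _).mp hg2 k hk.2, (IntermediateField.mem_fixingSubgroup_iff _ _).mp hg1 k hk.1]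
  have hfixE : E.fixingSubgroup = H1 ⊔ H2 := by
    rw [← hfF]
    exact IntermediateField.fixingSubgroup_fixedField (H1 ⊔ H2)
  -- cardinality of H1 ⊔ H2
  have hcardsup : Nat.card ↥(H1 ⊔ H2) = m * n := by
    have hset : ((H1 ⊔ H2 : Subgroup (K ≃ₐ[F] K)) : Set (K ≃ₐ[F] K))
        = (H1 : Set (K ≃ₐ[F] K)) * (H2 : Set (K ≃ₐ[F] K)) := Subgroup.normal_mul H1 H2
    have hle : Nat.card ↥(H1 ⊔ H2) ≤ n * m := by
      rw [← SetLike.coe_sort_coe, hset]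
      refine le_trans Set.natCard_mul_le ?_
      rw [SetLike.coe_sort_coe, SetLike.coe_sort_coe, hH1card, hH2card]
    have hdvd : m * n ∣ Nat.card ↥(H1 ⊔ H2) :=
      hmn.mul_dvd_of_dvd_of_dvd (hH2card ▸ Subgroup.card_dvd_of_le le_sup_right)
        (hH1card ▸ Subgroup.card_dvd_of_le le_sup_left)
    have hpos : 0 < Nat.card ↥(H1 ⊔ H2) := Nat.card_pos
    exact le_antisymm (mul_comm n m ▸ hle) (Nat.le_of_dvd hpos hdvd)
  have hEK : Module.finrank ↥E K = m * n := by
    have h0 := IntermediateField.finrank_fixedField_eq_card (F := F) (E := K) (H1 ⊔ H2)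
    rw [hfF] at h0
    rw [h0, hcardsup]
  -- the generator
  set z := α • x + β • y with hz
  set L := IntermediateField.adjoin (↥E) {z} with hL
  haveI : FiniteDimensional (↥E) K := Module.Finite.right F (↥E) K
  haveI : FiniteDimensional (↥L) K := Module.Finite.right (↥E) (↥L) K
  have key : ∀ σ : K ≃ₐ[↥L] K, σ = 1 := by
    intro σ
    have hzL : z ∈ L := IntermediateField.mem_adjoin_simple_self (↥E) z
    have hEL : ∀ k ∈ E, k ∈ L := by
      intro k hk
      exact L.algebraMap_mem ⟨k, hk⟩
    have hσfix : ∀ w ∈ L, σ w = w := fun w hw => σ.commutes ⟨w, hw⟩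
    set τ : K ≃ₐ[F] K := AlgEquiv.ofRingEquiv (f := σ.toRingEquiv)
      (fun f => hσfix _ (hEL _ (E.algebraMap_mem f))) with hτ
    have hτapp : ∀ k : K, τ k = σ k := fun k => rfl
    have hτmem : τ ∈ E.fixingSubgroup :=
      (IntermediateField.mem_fixingSubgroup_iff _ _).mpr fun k hk => hσfix k (hEL k hk)
    rw [hfixE] at hτmem
    have hτmem' : τ ∈ ((H1 : Set (K ≃ₐ[F] K)) * (H2 : Set (K ≃ₐ[F] K))) := by
      rw [← Subgroup.normal_mul]; exact hτmem
    obtain ⟨σ1, hσ1, σ2, hσ2, hτeq⟩ := hτmem'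
    have hxFx : x ∈ Fx := by rw [hFx]; exact IntermediateField.mem_adjoin_simple_self F x
    have hyFy : y ∈ Fy := by rw [hFy]; exact IntermediateField.mem_adjoin_simple_self F y
    have hσ2x : σ2 x ∈ Fx := by
      have hcomm := AlgEquiv.restrictNormal_commutes σ2 (↥Fx) ⟨x, hxFx⟩
      have : σ2 x = ↑((σ2.restrictNormal (↥Fx)) ⟨x, hxFx⟩) := hcomm.symm
      rw [this]
      exact SetLike.coe_mem _
    have hσ1y : σ1 y ∈ Fy := by
      have hcomm := AlgEquiv.restrictNormal_commutes σ1 (↥Fy) ⟨y, hyFy⟩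
      have : σ1 y = ↑((σ1.restrictNormal (↥Fy)) ⟨y, hyFy⟩) := hcomm.symm
      rw [this]
      exact SetLike.coe_mem _
    have hτx : τ x = σ2 x := by
      rw [← hτeq, AlgEquiv.mul_apply]
      exact (IntermediateField.mem_fixingSubgroup_iff _ _).mp hσ1 _ hσ2x
    have hτy : τ y = σ1 y := by
      rw [← hτeq, AlgEquiv.mul_apply, (IntermediateField.mem_fixingSubgroup_iff _ _).mp hσ2 y hyFy]
    have hτz : τ z = z := hσfix z hzL
    set c := σ2 x - x with hc
    set c' := y - σ1 y with hc'
    have heq : α • c = β • c' := by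
      have h1 : α • τ x + β • τ y = α • x + β • y := by
        rw [← map_smul, ← map_smul, ← map_add]
        exact hτz
      rw [hτx, hτy] at h1
      rw [hc, hc', smul_sub, smul_sub, sub_eq_sub_iff_add_eq_add]
      exact h1.trans (add_comm _ _)
    have smulmem : ∀ (M : IntermediateField F K) (γ : F) {k : K}, k ∈ M → γ • k ∈ M := by
      intro M γ k hk
      rw [Algebra.smul_def]
      exact M.mul_mem (M.algebraMap_mem γ) hk
    have hcFx : c ∈ Fx := Fx.sub_mem hσ2x hxFx
    have hc'Fy : c' ∈ Fy := Fy.sub_mem hyFy hσ1y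
    have hwE : α • c ∈ E := by
      rw [hE]
      exact ⟨smulmem Fx α hcFx, heq ▸ smulmem Fy β hc'Fy⟩
    have hcE : c ∈ E := by
      have h := smulmem E α⁻¹ hwE
      rwa [inv_smul_smul₀ hα] at h
    have hc'E : c' ∈ E := by
      have h0 := hwE; rw [heq] at h0
      have h := smulmem E β⁻¹ h0
      rwa [inv_smul_smul₀ hβ] at h
    by_cases hc0 : c = 0
    · have hc'0 : c' = 0 := by
        have h0 : β • c' = 0 := by rw [← heq, hc0, smul_zero]
        exact (smul_eq_zero.mp h0).resolve_left hβ
      have h2x : σ2 x = x := by rwa [hc, sub_eq_zero] at hc0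
      have h1y : σ1 y = y := by rw [hc', sub_eq_zero] at hc'0; exact hc'0.symm
      have hs2 : σ2 ∈ H1 := by
        have hstab : Fx ≤ IntermediateField.fixedField (Subgroup.zpowers σ2) := by
          rw [hFx]
          refine IntermediateField.adjoin_le_iff.mpr ?_
          intro k hk
          rw [Set.mem_singleton_iff] at hk
          rw [hk]
          intro g
          exact Subgroup.zpowers_le.mpr (show σ2 ∈ MulAction.stabilizer (K ≃ₐ[F] K) x from h2x) g.2
        rw [hH1]
        exact (IntermediateField.le_iff_le _ _).mp hstab (Subgroup.mem_zpowers σ2)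
      have hs1 : σ1 ∈ H2 := by
        have hstab : Fy ≤ IntermediateField.fixedField (Subgroup.zpowers σ1) := by
          rw [hFy]
          refine IntermediateField.adjoin_le_iff.mpr ?_
          intro k hk
          rw [Set.mem_singleton_iff] at hk
          rw [hk]
          intro g
          exact Subgroup.zpowers_le.mpr (show σ1 ∈ MulAction.stabilizer (K ≃ₐ[F] K) y from h1y) g.2
        rw [hH2]
        exact (IntermediateField.le_iff_le _ _).mp hstab (Subgroup.mem_zpowers σ1)
      have he2 : σ2 = 1 := by
        have h := (Subgroup.eq_bot_iff_forall _).mp hinf σ2 ⟨hs2, hσ2⟩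
        exact h
      have he1 : σ1 = 1 := by
        have h := (Subgroup.eq_bot_iff_forall _).mp hinf σ1 ⟨hσ1, hs1⟩
        exact h
      apply AlgEquiv.ext; intro k
      have : τ k = k := by rw [← hτeq, he1, he2]; simp
      rw [← hτapp k, this, AlgEquiv.one_apply]
    · exfalso
      have hc'0 : c' ≠ 0 := by
        intro h
        apply hc0
        have h0 : α • c = 0 := by rw [heq, h, smul_zero]
        exact (smul_eq_zero.mp h0).resolve_left hα
      have powkey : ∀ (g : K ≃ₐ[F] K) (u cc : K), g u = u + cc → g cc = cc →
          ∀ k : ℕ, (g ^ k) u = u + k • cc := by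
        intro g u cc hgu hgc k
        induction k with
        | zero => simp
        | succ k ih =>
          rw [pow_succ', AlgEquiv.mul_apply, ih, map_add, hgu, map_nsmul, hgc, succ_nsmul]
          abel
      have hσ2c : σ2 c = c := by
        refine (IntermediateField.mem_fixingSubgroup_iff _ _).mp hσ2 c ?_
        rw [hE] at hcE; exact hcE.2
      have hσ1c' : σ1 (-c') = -c' := by
        rw [map_neg]
        congr 1
        refine (IntermediateField.mem_fixingSubgroup_iff _ _).mp hσ1 c' ?_
        rw [hE] at hc'E; exact hc'E.1
      have hσ2x' : σ2 x = x + c := by rw [hc]; ring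
      have hσ1y' : σ1 y = y + (-c') := by rw [hc']; ring
      have hr : ((orderOf σ2 : ℕ) : K) = 0 := by
        have h0 := powkey σ2 x c hσ2x' hσ2c (orderOf σ2)
        rw [pow_orderOf_eq_one, AlgEquiv.one_apply] at h0
        have h1 : (orderOf σ2) • c = 0 := by
          have := h0.symm
          rwa [add_eq_left] at this
        rw [nsmul_eq_mul] at h1
        exact (mul_eq_zero.mp h1).resolve_right hc0
      have hs : ((orderOf σ1 : ℕ) : K) = 0 := by
        have h0 := powkey σ1 y (-c') hσ1y' hσ1c' (orderOf σ1)
        rw [pow_orderOf_eq_one, AlgEquiv.one_apply] at h0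
        have h1 : (orderOf σ1) • (-c') = 0 := by
          have := h0.symm
          rwa [add_eq_left] at this
        rw [nsmul_eq_mul] at h1
        exact (mul_eq_zero.mp h1).resolve_right (neg_ne_zero.mpr hc'0)
      have hrm : orderOf σ2 ∣ m := hH2card ▸ Subgroup.orderOf_dvd_natCard H2 hσ2
      have hsn : orderOf σ1 ∣ n := hH1card ▸ Subgroup.orderOf_dvd_natCard H1 hσ1
      haveI hcharP : CharP K (ringChar K) := ringChar.charP K
      have hp2 : ringChar K ∣ orderOf σ2 := (CharP.cast_eq_zero_iff K (ringChar K) _).mp hr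
      have hp1 : ringChar K ∣ orderOf σ1 := (CharP.cast_eq_zero_iff K (ringChar K) _).mp hs
      have hpm : ringChar K ∣ m := hp2.trans hrm
      have hpn : ringChar K ∣ n := hp1.trans hsn
      have hone : ringChar K = 1 := Nat.dvd_one.mp (hmn ▸ Nat.dvd_gcd hpm hpn)
      have hzero : (1 : K) = 0 := by
        have h0 := CharP.cast_eq_zero K (ringChar K)
        rw [hone, Nat.cast_one] at h0
        exact h0
      exact one_ne_zero hzero
  -- conclude
  have hcard : Fintype.card (K ≃ₐ[↥L] K) = 1 :=
    Fintype.card_eq_one_iff.mpr ⟨1, fun σ => key σ⟩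
  have hfr : Module.finrank (↥L) K = 1 := by
    rw [← IsGalois.card_aut_eq_finrank]; exact Nat.card_eq_fintype_card.trans hcard
  have hLtop : L = ⊤ := by
    refine IntermediateField.eq_of_le_of_finrank_le' le_top ?_
    rw [hfr, IntermediateField.finrank_top]
  constructor
  · exact hLtop
  · rw [hLtop, IntermediateField.finrank_top']
    exact hEK
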